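/- arXiv:2605.20243 — 5 statements merged into one kernel-verified Lean document; each statement's English description precedes it below -/
import Mathlib

section
/- For n=2m even, the permutation π(k)=k+m (mod n) of {1,...,n} has distance at least m² from the identity in the Cayley graph of S_n generated by the n transpositions along the cycle C_n. -/
/-- The transpositions along the cycle graph `C_n`: swaps of cyclically adjacent
positions `(i, i+1 mod n)`. -/
def cycleTranspositions (n : ℕ) [NeZero n] : Set (Equiv.Perm (Fin n)) :=
  { σ | ∃ i : Fin n, σ = Equiv.swap i (i + 1) }

section Aux

variable {n : ℕ} [NeZero n]

/-- Cyclic distance on `Fin n`. -/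
def cycD (a b : Fin n) : ℕ := min (a - b).val (b - a).val

lemma negval (x : Fin n) : (x.val = 0 ∧ (-x).val = 0) ∨ (x.val ≠ 0 ∧ x.val + (-x).val = n) := by
  rcases eq_or_ne x 0 with rfl | h
  · left; simp
  · right
    have hx : x.val ≠ 0 := fun h0 => h (Fin.ext h0)
    constructor
    · exact hx
    · have : (-x).val = (n - x.val) % n := by
        rw [Fin.neg_def]
      rw [this]
      have h1 : x.val < n := x.isLt
      have h2 : n - x.val < n := by omega
      rw [Nat.mod_eq_of_lt h2]
      omega

lemma addoneval (hn : 2 ≤ n) (x : Fin n) : (x + 1).val = (x.val + 1) % n := by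
  rw [Fin.add_def]
  have : (1 : Fin n).val = 1 := by
    rw [Fin.val_one']
    exact Nat.mod_eq_of_lt hn
  rw [this]

lemma key_le (hn : 2 ≤ n) (x : Fin n) :
    min ((x + 1).val) ((-(x + 1)).val) ≤ min x.val ((-x).val) + 1 := by
  have h1 := negval x
  have h2 := negval (x + 1)
  have h3 := addoneval hn x
  have h4 : x.val < n := x.isLt
  have h5 : (x + 1).val < n := (x + 1).isLt
  rcases Nat.lt_or_ge (x.val + 1) n with h | h
  · rw [Nat.mod_eq_of_lt h] at h3
    omega
  · have : x.val + 1 = n := by omega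
    rw [this, Nat.mod_self] at h3
    omega

lemma key_ge (hn : 2 ≤ n) (x : Fin n) :
    min x.val ((-x).val) ≤ min ((x + 1).val) ((-(x + 1)).val) + 1 := by
  have h1 := negval x
  have h2 := negval (x + 1)
  have h3 := addoneval hn x
  have h4 : x.val < n := x.isLt
  have h5 : (x + 1).val < n := (x + 1).isLt
  rcases Nat.lt_or_ge (x.val + 1) n with h | h
  · rw [Nat.mod_eq_of_lt h] at h3
    omega
  · have : x.val + 1 = n := by omega
    rw [this, Nat.mod_self] at h3
    omega

lemma cycD_add_one_le (hn : 2 ≤ n) (c b : Fin n) : cycD (c + 1) b ≤ cycD c b + 1 := by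
  have e1 : c + 1 - b = (c - b) + 1 := by abel
  have e2 : b - (c + 1) = -((c - b) + 1) := by abel
  unfold cycD
  rw [e1, e2]
  have e3 : b - c = -(c - b) := by abel
  rw [e3]
  exact key_le hn (c - b)

lemma cycD_le_add_one (hn : 2 ≤ n) (c b : Fin n) : cycD c b ≤ cycD (c + 1) b + 1 := by
  have e1 : c + 1 - b = (c - b) + 1 := by abel
  have e2 : b - (c + 1) = -((c - b) + 1) := by abel
  unfold cycD
  rw [e1, e2]
  have e3 : b - c = -(c - b) := by abel
  rw [e3]
  exact key_ge hn (c - b)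

lemma swap_cycD (hn : 2 ≤ n) (i a b : Fin n) :
    cycD (Equiv.swap i (i + 1) a) b ≤
      cycD a b + ((if a = i then 1 else 0) + (if a = i + 1 then 1 else 0)) := by
  have hne : i ≠ i + 1 := by
    intro h
    have : (0 : Fin n) = 1 := by
      have := add_right_cancel (a := i) (b := (0 : Fin n)) (c := i)
      nth_rewrite 1 [← add_zero i] at h
      exact add_left_cancel h
    have h0 : ((0 : Fin n)).val = ((1 : Fin n)).val := by rw [this]
    rw [Fin.val_zero, Fin.val_one'] at h0
    rw [Nat.mod_eq_of_lt hn] at h0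
    omega
  rcases eq_or_ne a i with rfl | h1
  · rw [Equiv.swap_apply_left, if_pos rfl, if_neg hne]
    simpa using cycD_add_one_le hn a b
  · rcases eq_or_ne a (i + 1) with rfl | h2
    · rw [Equiv.swap_apply_right, if_neg (Ne.symm hne), if_pos rfl]
      simpa using cycD_le_add_one hn i b
    · rw [Equiv.swap_apply_of_ne_of_ne h1 h2, if_neg h1, if_neg h2]
      simp

/-- The potential function: total cyclic displacement. -/
def cycPhi (σ : Equiv.Perm (Fin n)) : ℕ := ∑ k, cycD (σ k) k

lemma sum_indicator (τ : Equiv.Perm (Fin n)) (j : Fin n) :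
    (∑ k : Fin n, (if τ k = j then 1 else 0)) = 1 := by
  have h := Equiv.sum_comp τ (fun x => if x = j then (1 : ℕ) else 0)
  simpa using h

lemma cycPhi_step (hn : 2 ≤ n) (i : Fin n) (τ : Equiv.Perm (Fin n)) :
    cycPhi (Equiv.swap i (i + 1) * τ) ≤ cycPhi τ + 2 := by
  unfold cycPhi
  calc ∑ k, cycD ((Equiv.swap i (i + 1) * τ) k) k
      ≤ ∑ k, (cycD (τ k) k + ((if τ k = i then 1 else 0) + (if τ k = i + 1 then 1 else 0))) :=
        Finset.sum_le_sum fun k _ => swap_cycD hn i (τ k) k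
    _ = (∑ k, cycD (τ k) k) + ((∑ k : Fin n, (if τ k = i then 1 else 0)) +
          (∑ k : Fin n, (if τ k = i + 1 then 1 else 0))) := by
        rw [Finset.sum_add_distrib, Finset.sum_add_distrib]
    _ = (∑ k, cycD (τ k) k) + 2 := by
        rw [sum_indicator τ i, sum_indicator τ (i + 1)]

lemma cycPhi_prod (hn : 2 ≤ n) (l : List (Equiv.Perm (Fin n)))
    (hl : ∀ t ∈ l, t ∈ cycleTranspositions n) :
    cycPhi l.prod ≤ 2 * l.length := by
  induction l with
  | nil =>
      simp only [List.prod_nil, List.length_nil, Nat.mul_zero]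
      unfold cycPhi
      simp [cycD]
  | cons t l ih =>
      obtain ⟨i, rfl⟩ := hl t List.mem_cons_self
      have hrest : ∀ t ∈ l, t ∈ cycleTranspositions n := fun t ht => hl t (List.mem_cons_of_mem _ ht)
      rw [List.prod_cons]
      calc cycPhi (Equiv.swap i (i + 1) * l.prod) ≤ cycPhi l.prod + 2 := cycPhi_step hn i l.prod
        _ ≤ 2 * l.length + 2 := by have := ih hrest; omega
        _ = 2 * (Equiv.swap i (i + 1) :: l).length := by simp [List.length_cons]; ring

end Aux

/-- For `n = 2m` even, the half-shift permutation `π(k) = k + m (mod n)` has distance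
at least `m²` from the identity in the Cayley graph of `S_n` generated by the `n`
transpositions along the cycle `C_n`. -/
theorem half_shift_distance_lower_bound (n m : ℕ) [NeZero n]
    (hn : n = 2 * m) (hm : 0 < m)
    (l : List (Equiv.Perm (Fin n)))
    (hl : ∀ t ∈ l, t ∈ cycleTranspositions n)
    (hprod : l.prod = Equiv.addRight (Fin.ofNat n m)) :
    m ^ 2 ≤ l.length := by
  have hn2 : 2 ≤ n := by omega
  have hmn : m < n := by omega
  have hmv : ((Fin.ofNat n m)).val = m := by
    rw [Fin.val_ofNat]
    exact Nat.mod_eq_of_lt hmn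
  have hnegmv : ((-(Fin.ofNat n m))).val = m := by
    rcases negval (n := n) (Fin.ofNat n m) with ⟨h1, h2⟩ | ⟨h1, h2⟩
    · omega
    · omega
  have hPhi : cycPhi (Equiv.addRight ((Fin.ofNat n m))) = 2 * m ^ 2 := by
    unfold cycPhi
    have : ∀ k : Fin n, cycD ((Equiv.addRight ((Fin.ofNat n m))) k) k = m := by
      intro k
      have e1 : (Equiv.addRight ((Fin.ofNat n m))) k = k + Fin.ofNat n m := rfl
      unfold cycD
      rw [e1]
      have e2 : k + (Fin.ofNat n m) - k = (Fin.ofNat n m) := by abel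
      have e3 : k - (k + (Fin.ofNat n m)) = -(Fin.ofNat n m) := by abel
      rw [e2, e3, hmv, hnegmv]
      simp
    rw [Finset.sum_congr rfl (fun k _ => this k), Finset.sum_const, Finset.card_univ,
      Fintype.card_fin, smul_eq_mul, hn]
    ring
  have hbound := cycPhi_prod hn2 l hl
  rw [hprod, hPhi] at hbound
  omega
end

section
/- The diameter of the Cayley graph of S_{n+1} generated by the transpositions of the wheel graph W_{n+1} (center c connected to all rim vertices r_1,...,r_n, plus rim edges {r_i,r_{i+1}}) is at most ⌊3n/2⌋. -/
open Equiv Equiv.Perm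

private lemma formPerm_map_conj {α : Type*} [DecidableEq α] (f : Equiv.Perm α) :
    ∀ l : List α, List.formPerm (l.map f) = f * List.formPerm l * f⁻¹
  | [] => by simp
  | [a] => by simp
  | a :: b :: l => by
    rw [List.map_cons, List.map_cons, List.formPerm_cons_cons, ← List.map_cons,
      formPerm_map_conj f (b :: l), List.formPerm_cons_cons, swap_apply_apply]
    group

private lemma star_formPerm {α : Type*} [DecidableEq α] (z : α) :
    ∀ l : List α, l.Nodup → z ∉ l →
      List.formPerm (z :: l) = (l.reverse.map (fun x => Equiv.swap z x)).prod
  | [], _, _ => by simp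
  | a :: t, hnd, hz => by
    have hza : z ≠ a := fun h => hz (h ▸ List.mem_cons_self)
    have hat : t.map (Equiv.swap z a) = t := by
      rw [show t = t.map id by simp]
      rw [List.map_map]
      apply List.map_congr_left
      intro x hx
      simp only [Function.comp_apply, id_eq]
      exact Equiv.swap_apply_of_ne_of_ne
        (fun h => hz (h ▸ List.mem_cons_of_mem _ hx))
        (fun h => (List.nodup_cons.mp hnd).1 (h ▸ hx))
    have h1 : List.formPerm (a :: t) =
        Equiv.swap z a * List.formPerm (z :: t) * (Equiv.swap z a)⁻¹ := by
      conv_lhs => rw [show (a :: t) = (z :: t).map (Equiv.swap z a) by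
        simp [hat]]
      exact formPerm_map_conj _ _
    have ih := star_formPerm z t (List.nodup_cons.mp hnd).2
      (fun h => hz (List.mem_cons_of_mem _ h))
    rw [List.formPerm_cons_cons, h1, ih, List.reverse_cons, List.map_append,
      List.prod_append, Equiv.swap_inv]
    simp [mul_assoc]

private lemma toList_eq_cons {α : Type*} [DecidableEq α] [Fintype α] (p : Equiv.Perm α)
    (x : α) (hx : x ∈ p.support) : p.toList x = x :: (p.toList x).tail := by
  have h1 := Equiv.Perm.length_toList_pos_of_mem_support p x hx
  have h2 := Equiv.Perm.toList_getElem_zero (p := p) (x := x) hx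
  have hne : p.toList x ≠ [] := List.ne_nil_of_length_pos h1
  have hh : (p.toList x).head hne = x := by
    simpa [List.get_eq_getElem, List.head_eq_getElem] using h2
  conv_lhs => rw [← List.cons_head_tail hne, hh]

private lemma cycle_star {n : ℕ} [NeZero n] {γ : Equiv.Perm (Fin (n + 1))}
    (hγ : γ.IsCycle) :
    ∃ l : List (Equiv.Perm (Fin (n + 1))),
      (∀ t ∈ l, ∃ x : Fin (n + 1), x ≠ 0 ∧ t = Equiv.swap 0 x) ∧ l.prod = γ ∧
      2 * l.length ≤ 3 * (γ.support.erase 0).card := by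
  classical
  by_cases h0 : γ 0 = 0
  · -- cycle avoiding 0
    obtain ⟨x, hx, -⟩ := id hγ
    have hxs : x ∈ γ.support := Equiv.Perm.mem_support.mpr hx
    set m := γ.toList x with hm
    have hnd : m.Nodup := Equiv.Perm.nodup_toList γ x
    have h0m : (0 : Fin (n + 1)) ∉ m := by
      intro h
      obtain ⟨⟨i, hi⟩, -⟩ := Equiv.Perm.mem_toList_iff.mp h
      have : (0 : Fin (n + 1)) ∈ γ.support := by
        rw [← hi]
        simpa [Equiv.Perm.zpow_apply_mem_support] using hxs
      exact (Equiv.Perm.mem_support.mp this) h0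
    have hform : m.formPerm = γ := by
      rw [hm, Equiv.Perm.formPerm_toList, hγ.cycleOf_eq hx]
    have hcons : m = x :: m.tail := toList_eq_cons γ x hxs
    have hlen : m.length = γ.support.card := by
      rw [hm, Equiv.Perm.length_toList, hγ.cycleOf_eq hx]
    have hx0 : x ≠ 0 := fun h => hx (h ▸ h0)
    have hkey : List.formPerm (0 :: m) = Equiv.swap 0 x * γ := by
      conv_lhs => rw [hcons]
      rw [List.formPerm_cons_cons, ← hcons, hform]
    have hstar := star_formPerm (0 : Fin (n + 1)) m hnd h0m
    refine ⟨Equiv.swap 0 x :: m.reverse.map (fun y => Equiv.swap 0 y), ?_, ?_, ?_⟩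
    · intro t ht
      rcases List.mem_cons.mp ht with rfl | ht'
      · exact ⟨x, hx0, rfl⟩
      · obtain ⟨y, hy, rfl⟩ := List.mem_map.mp ht'
        exact ⟨y, fun h => h0m (h ▸ List.mem_reverse.mp hy), rfl⟩
    · rw [List.prod_cons, ← hstar, hkey, ← mul_assoc, Equiv.swap_mul_self, one_mul]
    · have hcard : (γ.support.erase 0).card = γ.support.card := by
        rw [Finset.erase_eq_of_notMem (by simp [Equiv.Perm.mem_support, h0])]
      have h2 := hγ.two_le_card_support
      simp only [List.length_cons, List.length_map, List.length_reverse, hlen, hcard]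
      omega
  · -- 0 in the support of the cycle
    have h0s : (0 : Fin (n + 1)) ∈ γ.support := Equiv.Perm.mem_support.mpr h0
    set m := γ.toList 0 with hm
    have hnd : m.Nodup := Equiv.Perm.nodup_toList γ 0
    have hcons : m = 0 :: m.tail := toList_eq_cons γ 0 h0s
    have h0t : (0 : Fin (n + 1)) ∉ m.tail := by
      have := hnd
      rw [hcons] at this
      exact (List.nodup_cons.mp this).1
    have hndt : m.tail.Nodup := List.Nodup.of_cons (hcons ▸ hnd)
    have hform : m.formPerm = γ := by
      rw [hm, Equiv.Perm.formPerm_toList, hγ.cycleOf_eq h0]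
    have hlen : m.length = γ.support.card := by
      rw [hm, Equiv.Perm.length_toList, hγ.cycleOf_eq h0]
    have hstar := star_formPerm (0 : Fin (n + 1)) m.tail hndt h0t
    refine ⟨m.tail.reverse.map (fun y => Equiv.swap 0 y), ?_, ?_, ?_⟩
    · intro t ht
      obtain ⟨y, hy, rfl⟩ := List.mem_map.mp ht
      exact ⟨y, fun h => h0t (h ▸ List.mem_reverse.mp hy), rfl⟩
    · rw [← hstar, ← hcons, hform]
    · have hcard : (γ.support.erase 0).card = γ.support.card - 1 :=
        Finset.card_erase_of_mem h0s
      have h2 := hγ.two_le_card_support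
      have : m.tail.length = m.length - 1 := by rw [hcons]; simp
      simp only [List.length_map, List.length_reverse, this, hlen, hcard]
      omega

private lemma list_star {n : ℕ} [NeZero n] :
    ∀ L : List (Equiv.Perm (Fin (n + 1))), (∀ γ ∈ L, γ.IsCycle) →
      L.Pairwise Equiv.Perm.Disjoint →
      ∃ l : List (Equiv.Perm (Fin (n + 1))),
        (∀ t ∈ l, ∃ x : Fin (n + 1), x ≠ 0 ∧ t = Equiv.swap 0 x) ∧ l.prod = L.prod ∧
        2 * l.length ≤ 3 * (L.prod.support.erase 0).card
  | [], _, _ => ⟨[], by simp, by simp, by simp⟩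
  | γ :: L, hcyc, hdis => by
    obtain ⟨l, hl1, hl2, hl3⟩ := list_star L (fun g hg => hcyc g (List.mem_cons_of_mem _ hg))
      (List.Pairwise.of_cons hdis)
    obtain ⟨lγ, hg1, hg2, hg3⟩ := cycle_star (hcyc γ List.mem_cons_self)
    have hd : Equiv.Perm.Disjoint γ L.prod :=
      Equiv.Perm.disjoint_prod_right _ (fun g hg => List.rel_of_pairwise_cons hdis hg)
    have hsupp : (γ * L.prod).support = γ.support ∪ L.prod.support := hd.support_mul
    have hde : Disjoint (γ.support.erase 0) (L.prod.support.erase 0) :=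
      (hd.disjoint_support.mono (Finset.erase_subset _ _) (Finset.erase_subset _ _))
    have hcard : ((γ * L.prod).support.erase 0).card =
        (γ.support.erase 0).card + (L.prod.support.erase 0).card := by
      rw [hsupp, Finset.erase_union_distrib, Finset.card_union_of_disjoint hde]
    refine ⟨lγ ++ l, ?_, ?_, ?_⟩
    · intro t ht
      rcases List.mem_append.mp ht with h | h
      · exact hg1 t h
      · exact hl1 t h
    · rw [List.prod_append, hg2, hl2, List.prod_cons]
    · rw [List.prod_cons, hcard, List.length_append]
      omega

private lemma star_decomp {n : ℕ} [NeZero n] (σ : Equiv.Perm (Fin (n + 1))) :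
    ∃ l : List (Equiv.Perm (Fin (n + 1))),
      (∀ t ∈ l, ∃ x : Fin (n + 1), x ≠ 0 ∧ t = Equiv.swap 0 x) ∧ l.prod = σ ∧
      2 * l.length ≤ 3 * n := by
  obtain ⟨L, hp, hc, hd⟩ := σ.cycleFactors
  obtain ⟨l, h1, h2, h3⟩ := list_star L hc hd
  refine ⟨l, h1, by rw [h2, hp], ?_⟩
  have hsub : (L.prod.support.erase 0).card ≤ n := by
    have : L.prod.support.erase 0 ⊆ (Finset.univ : Finset (Fin (n + 1))).erase 0 :=
      Finset.erase_subset_erase _ (Finset.subset_univ _)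
    calc (L.prod.support.erase 0).card ≤ ((Finset.univ : Finset (Fin (n + 1))).erase 0).card :=
          Finset.card_le_card this
      _ = n := by rw [Finset.card_erase_of_mem (Finset.mem_univ _)]; simp
  omega



/-- The transpositions of the wheel graph `W_{n+1}`: the center `0` is connected to
all rim vertices `i.succ` (star edges) and cyclically consecutive rim vertices are
connected (rim edges). -/
def wheelTranspositions (n : ℕ) [NeZero n] : Set (Equiv.Perm (Fin (n + 1))) :=
  { σ | (∃ x : Fin (n + 1), x ≠ 0 ∧ σ = Equiv.swap 0 x) ∨
        (∃ i : Fin n, σ = Equiv.swap i.succ (i + 1).succ) }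

/-- The diameter of the Cayley graph of `S_{n+1}` generated by the wheel-graph
transpositions is at most `⌊3n/2⌋`: every permutation is a product of at most
`⌊3n/2⌋` wheel transpositions. -/
theorem wheel_cayley_diameter_upper_bound (n : ℕ) [NeZero n]
    (σ : Equiv.Perm (Fin (n + 1))) :
    ∃ l : List (Equiv.Perm (Fin (n + 1))),
      (∀ t ∈ l, t ∈ wheelTranspositions n) ∧ l.prod = σ ∧ l.length ≤ 3 * n / 2 := by
  obtain ⟨l, h1, h2, h3⟩ := star_decomp σ
  refine ⟨l, ?_, h2, ?_⟩
  · intro t ht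
    obtain ⟨x, hx, rfl⟩ := h1 t ht
    exact Or.inl ⟨x, hx, rfl⟩
  · omega
end

section
/- For n≥4, the diameter of the Cayley graph of S_{n+1} generated by the wheel-graph transpositions of W_{n+1} is at least n. -/
section Aux

variable {n : ℕ} [NeZero n]

/-- Distance in the wheel graph: 0 if equal, 1 if adjacent, 2 otherwise. -/
def wd (n : ℕ) [NeZero n] (x y : Fin (n + 1)) : ℕ :=
  if x = y then 0
  else if x = 0 ∨ y = 0 ∨ ∃ i : Fin n, (x = i.succ ∧ y = (i+1).succ) ∨ (y = i.succ ∧ x = (i+1).succ)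
  then 1 else 2

lemma wd_self (x : Fin (n+1)) : wd n x x = 0 := by simp [wd]

lemma wd_le_two (x y : Fin (n+1)) : wd n x y ≤ 2 := by
  unfold wd; split_ifs <;> omega

lemma wd_pos {x y : Fin (n+1)} (h : x ≠ y) : 1 ≤ wd n x y := by
  unfold wd
  split_ifs with h1
  · exact absurd h1 h
  all_goals omega

lemma wd_tri {u v x : Fin (n+1)} (h : wd n u v ≤ 1) : wd n u x ≤ wd n v x + 1 := by
  by_cases hvx : v = x
  · subst hvx
    calc wd n u v ≤ 1 := h
    _ ≤ wd n v v + 1 := by simp [wd_self]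
  · have := wd_pos (n := n) hvx
    have := wd_le_two (n := n) u x
    omega

lemma wd_swap (a b v x : Fin (n+1)) (h1 : wd n a b ≤ 1) (h2 : wd n b a ≤ 1) :
    wd n (Equiv.swap a b v) x ≤ wd n v x + (if v = a ∨ v = b then 1 else 0) := by
  by_cases hva : v = a
  · subst hva
    rw [Equiv.swap_apply_left]
    simp only [true_or, if_pos]
    exact wd_tri h2
  by_cases hvb : v = b
  · subst hvb
    rw [Equiv.swap_apply_right]
    simp only [or_true, if_pos]
    exact wd_tri h1
  · rw [Equiv.swap_apply_of_ne_of_ne hva hvb]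
    simp [hva, hvb]

/-- The potential function: total displacement. -/
def Dpot (n : ℕ) [NeZero n] (τ : Equiv.Perm (Fin (n+1))) : ℕ := ∑ x, wd n (τ x) x

lemma Dpot_one : Dpot n 1 = 0 := by simp [Dpot, wd_self]

lemma Dpot_mul_swap (a b : Fin (n+1)) (hab : a ≠ b) (h1 : wd n a b ≤ 1) (h2 : wd n b a ≤ 1)
    (τ : Equiv.Perm (Fin (n+1))) :
    Dpot n (Equiv.swap a b * τ) ≤ Dpot n τ + 2 := by
  have key : ∀ x, wd n ((Equiv.swap a b * τ) x) x
      ≤ wd n (τ x) x + (if τ x = a ∨ τ x = b then 1 else 0) := by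
    intro x
    rw [Equiv.Perm.mul_apply]
    exact wd_swap a b (τ x) x h1 h2
  calc Dpot n (Equiv.swap a b * τ)
      ≤ ∑ x, (wd n (τ x) x + (if τ x = a ∨ τ x = b then 1 else 0)) :=
        Finset.sum_le_sum (fun x _ => key x)
    _ = Dpot n τ + ∑ x, (if τ x = a ∨ τ x = b then 1 else 0) := by
        rw [Finset.sum_add_distrib]; rfl
    _ = Dpot n τ + 2 := by
        congr 1
        rw [Equiv.sum_comp τ (fun y => if y = a ∨ y = b then (1:ℕ) else 0)]
        have : ∀ y : Fin (n+1), (if y = a ∨ y = b then (1:ℕ) else 0)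
            = (if y = a then 1 else 0) + (if y = b then 1 else 0) := by
          intro y
          by_cases hy1 : y = a <;> by_cases hy2 : y = b <;> simp_all
        simp only [this]
        rw [Finset.sum_add_distrib, Finset.sum_ite_eq' Finset.univ a (fun _ => (1:ℕ)),
          Finset.sum_ite_eq' Finset.univ b (fun _ => (1:ℕ))]
        simp

lemma wd_le_one_of_star {x : Fin (n+1)} : wd n 0 x ≤ 1 := by
  unfold wd; split_ifs <;> simp_all
lemma wd_le_one_of_star' {x : Fin (n+1)} : wd n x 0 ≤ 1 := by
  unfold wd; split_ifs <;> simp_all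
lemma wd_le_one_of_rim (i : Fin n) : wd n i.succ (i+1).succ ≤ 1 := by
  unfold wd; split_ifs with h1 h2 <;> try omega
  exact absurd (Or.inr (Or.inr ⟨i, Or.inl ⟨rfl, rfl⟩⟩)) h2
lemma wd_le_one_of_rim' (i : Fin n) : wd n (i+1).succ i.succ ≤ 1 := by
  unfold wd; split_ifs with h1 h2 <;> try omega
  exact absurd (Or.inr (Or.inr ⟨i, Or.inr ⟨rfl, rfl⟩⟩)) h2

/-- The hard permutation: fix the center, shift every rim vertex by 2. -/
def shiftTwo (n : ℕ) [NeZero n] : Equiv.Perm (Fin (n+1)) where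
  toFun := Fin.cases 0 (fun i => (i + 2).succ)
  invFun := Fin.cases 0 (fun i => (i - 2).succ)
  left_inv x := by
    cases x using Fin.cases with
    | zero => simp
    | succ i => simp
  right_inv x := by
    cases x using Fin.cases with
    | zero => simp
    | succ i => simp

open Fin.NatCast in
lemma natcast_ne_zero (hn : 4 ≤ n) (k : ℕ) (hk0 : 0 < k) (hk : k < 4) : ((k:ℕ) : Fin n) ≠ 0 := by
  rw [Ne, Fin.natCast_eq_zero]
  intro hd
  exact absurd (Nat.le_of_dvd hk0 hd) (by omega)

open Fin.NatCast in
lemma cast_ne (hn : 4 ≤ n) {a : Fin n} (k : ℕ) (hk0 : 0 < k) (hk : k < 4)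
    (h : a + (k:ℕ) = a) : False := by
  have h0 : a + ((k:ℕ):Fin n) = a + 0 := by simpa using h
  have := add_left_cancel h0
  exact absurd this (natcast_ne_zero hn k hk0 hk)

open Fin.NatCast Fin.CommRing in
lemma wd_shift (hn : 4 ≤ n) (i : Fin n) : wd n ((i + 2).succ) i.succ = 2 := by
  unfold wd
  rw [if_neg, if_neg]
  · rintro (h | h | ⟨j, ⟨h1, h2⟩ | ⟨h1, h2⟩⟩)
    · exact Fin.succ_ne_zero _ h
    · exact Fin.succ_ne_zero _ h
    · rw [Fin.succ_inj] at h1 h2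
      subst h1
      refine cast_ne hn 3 (by norm_num) (by norm_num) (a := i) ?_
      have : i + ((3:ℕ) : Fin n) = i + (2 + 1) := by push_cast; ring
      rw [this, ← add_assoc]
      exact h2.symm
    · rw [Fin.succ_inj] at h1 h2
      subst h1
      refine cast_ne hn 1 (by norm_num) (by norm_num) (a := i + 1) ?_
      have : i + 1 + ((1:ℕ) : Fin n) = i + 2 := by push_cast; ring
      rw [this]
      exact h2
  · intro h
    rw [Fin.succ_inj] at h
    refine cast_ne hn 2 (by norm_num) (by norm_num) (a := i) ?_
    have : i + ((2:ℕ) : Fin n) = i + 2 := by push_cast; ring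
    rw [this]
    exact h

lemma Dpot_shiftTwo (hn : 4 ≤ n) : Dpot n (shiftTwo n) = 2 * n := by
  unfold Dpot
  rw [Fin.sum_univ_succ]
  have h0 : shiftTwo n 0 = 0 := rfl
  have hs : ∀ i : Fin n, shiftTwo n i.succ = (i+2).succ := fun i => rfl
  simp only [h0, hs, wd_self, wd_shift hn]
  simp [Finset.sum_const, Finset.card_univ, Nat.mul_comm]

lemma Dpot_prod_le (l : List (Equiv.Perm (Fin (n+1))))
    (hl : ∀ t ∈ l, t ∈ wheelTranspositions n) :
    Dpot n l.prod ≤ 2 * l.length := by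
  induction l with
  | nil => simp [Dpot_one]
  | cons t l ih =>
    have ht := hl t List.mem_cons_self
    have hrest := ih (fun s hs => hl s (List.mem_cons_of_mem _ hs))
    rw [List.prod_cons]
    have step : Dpot n (t * l.prod) ≤ Dpot n l.prod + 2 := by
      rcases ht with ⟨x, hx, rfl⟩ | ⟨i, rfl⟩
      · exact Dpot_mul_swap 0 x (Ne.symm hx) wd_le_one_of_star wd_le_one_of_star' _
      · by_cases h : i.succ = (i+1).succ
        · rw [h, Equiv.swap_self, ← Equiv.Perm.one_def, one_mul]
          omega
        · exact Dpot_mul_swap _ _ h (wd_le_one_of_rim i) (wd_le_one_of_rim' i) _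
    simp only [List.length_cons]
    omega

end Aux

/-- For `n ≥ 4`, the diameter of the Cayley graph of `S_{n+1}` generated by the
wheel-graph transpositions of `W_{n+1}` is at least `n`: some permutation requires
at least `n` generators. -/
theorem wheel_cayley_diameter_lower_bound (n : ℕ) [NeZero n] (hn : 4 ≤ n) :
    ∃ σ : Equiv.Perm (Fin (n + 1)), ∀ l : List (Equiv.Perm (Fin (n + 1))),
      (∀ t ∈ l, t ∈ wheelTranspositions n) → l.prod = σ → n ≤ l.length := by
  refine ⟨shiftTwo n, fun l hl hp => ?_⟩
  have h1 := Dpot_prod_le l hl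
  rw [hp, Dpot_shiftTwo hn] at h1
  omega
end

section
/- The diameter of the Hanoi graph H_3^n (3 pegs, n disks) is 2^n−1; that is, any configuration can be transformed into any other in at most 2^n−1 moves, with equality attained by pairs of perfect states. -/
/-- One legal Hanoi move from configuration `f` to configuration `g`: some disk `d`
changes peg, all other disks stay, and no smaller disk lies on the source peg or on
the target peg of `d`. Configurations assign to each disk (`0` smallest) its peg. -/
def HanoiMove (n : ℕ) (f g : Fin n → Fin 3) : Prop :=
  f ≠ g ∧ ∃ d : Fin n, (∀ e : Fin n, e ≠ d → f e = g e) ∧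
    ∀ e : Fin n, e < d → f e ≠ f d ∧ f e ≠ g d

/-- The Hanoi graph `H_3^n`: vertices are the `n`-disk, `3`-peg configurations,
edges are single legal moves. -/
def hanoiGraph (n : ℕ) : SimpleGraph (Fin n → Fin 3) :=
  SimpleGraph.fromRel (HanoiMove n)

namespace HanoiAux

variable {n : ℕ}

lemma other_ne (p r : Fin 3) (h : p ≠ r) : -(p + r) ≠ p ∧ -(p + r) ≠ r := by
  revert p r; decide

lemma fin3_eq_other {x p r : Fin 3} (hpr : p ≠ r) (h1 : x ≠ p) (h2 : x ≠ r) :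
    x = -(p + r) := by
  revert x p r; decide

lemma adj_move {a b : Fin n → Fin 3} (h : (hanoiGraph n).Adj a b) :
    ∃ d : Fin n, a d ≠ b d ∧ (∀ e, e ≠ d → a e = b e) ∧
      ∀ e, e < d → a e ≠ a d ∧ a e ≠ b d := by
  rw [hanoiGraph, SimpleGraph.fromRel_adj] at h
  obtain ⟨hne, hm⟩ := h
  have key : ∀ (x y : Fin n → Fin 3), x ≠ y → HanoiMove n x y →
      ∃ d : Fin n, x d ≠ y d ∧ (∀ e, e ≠ d → x e = y e) ∧
        ∀ e, e < d → x e ≠ x d ∧ x e ≠ y d := by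
    rintro x y hxy ⟨-, d, heq, hsm⟩
    refine ⟨d, ?_, heq, hsm⟩
    intro hd
    apply hxy; funext e
    by_cases he : e = d
    · subst he; exact hd
    · exact heq e he
  rcases hm with hm | hm
  · exact key a b hne hm
  · obtain ⟨d, hd, heq, hsm⟩ := key b a hne.symm hm
    refine ⟨d, fun h' => hd h'.symm, fun e he => (heq e he).symm, fun e he => ?_⟩
    have h2 : b e = a e := heq e (ne_of_lt he)
    constructor
    · intro hx; exact (hsm e he).2 (h2.trans hx)
    · intro hx; exact (hsm e he).1 (h2.trans hx)

lemma adj_of_move {a b : Fin n → Fin 3} (d : Fin n) (hd : a d ≠ b d)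
    (heq : ∀ e, e ≠ d → a e = b e) (hsm : ∀ e, e < d → a e ≠ a d ∧ a e ≠ b d) :
    (hanoiGraph n).Adj a b := by
  have hne : a ≠ b := fun h => hd (congrFun h d)
  rw [hanoiGraph, SimpleGraph.fromRel_adj]
  exact ⟨hne, Or.inl ⟨hne, d, heq, hsm⟩⟩

lemma adj_move_of_ne {c c' : Fin n → Fin 3} (h : (hanoiGraph n).Adj c c') {d : Fin n}
    (hd : c d ≠ c' d) :
    (∀ e, e ≠ d → c e = c' e) ∧ ∀ e, e < d → c e ≠ c d ∧ c e ≠ c' d := by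
  obtain ⟨d0, h1, h2, h3⟩ := adj_move h
  have hdd : d = d0 := by
    by_contra hne
    exact hd (h2 d hne)
  subst hdd
  exact ⟨h2, h3⟩

/-- The configuration with all disks below `k` moved to peg `p`. -/
def below (k : ℕ) (p : Fin 3) (f : Fin n → Fin 3) : Fin n → Fin 3 :=
  fun e => if (e : ℕ) < k then p else f e

lemma toPerfect (k : ℕ) (p : Fin 3) (f : Fin n → Fin 3) :
    ∃ W : (hanoiGraph n).Walk f (below k p f), W.length + 1 ≤ 2 ^ k := by
  induction k generalizing f p with
  | zero =>
    have h : below 0 p f = f := by funext e; simp [below]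
    exact ⟨(SimpleGraph.Walk.nil).copy rfl h.symm, by simp⟩
  | succ k ih =>
    have hpow : 2 ^ (k + 1) = 2 ^ k + 2 ^ k := by ring
    by_cases hk : k < n
    · set d : Fin n := ⟨k, hk⟩ with hdk
      by_cases hf : f d = p
      · have heq : below (k + 1) p f = below k p f := by
          funext e; simp only [below]
          by_cases h1 : (e : ℕ) < k
          · simp [h1, Nat.lt_succ_of_lt h1]
          · by_cases h2 : (e : ℕ) < k + 1
            · have he : e = d := Fin.ext (show (e : ℕ) = k by omega)
              simp [h1, h2, he, hf]
            · simp [h1, h2]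
        obtain ⟨W, hW⟩ := ih p f
        exact ⟨W.copy rfl heq.symm, by simpa using hW.trans (by omega)⟩
      · set s : Fin 3 := -(f d + p) with hs
        have hsne : s ≠ f d ∧ s ≠ p := other_ne (f d) p hf
        set f1 : Fin n → Fin 3 := below k s f with hf1
        set f2 : Fin n → Fin 3 := fun e => if e = d then p else f1 e with hf2
        obtain ⟨W1, hW1⟩ := ih s f
        have f1d : f1 d = f d := by simp [hf1, below, hdk]
        have f2d : f2 d = p := by simp [hf2]
        have hadj : (hanoiGraph n).Adj f1 f2 := by
          apply adj_of_move d
          · rw [f1d, f2d]; exact hf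
          · intro e he; simp [hf2, he]
          · intro e he
            have hek : (e : ℕ) < k := he
            have h1e : f1 e = s := by simp [hf1, below, hek]
            rw [h1e, f1d, f2d]
            exact hsne
        have heq : below (k + 1) p f = below k p f2 := by
          funext e; simp only [below]
          by_cases h1 : (e : ℕ) < k
          · simp [h1, Nat.lt_succ_of_lt h1]
          · by_cases h2 : (e : ℕ) < k + 1
            · have he : e = d := Fin.ext (show (e : ℕ) = k by omega)
              simp [h1, h2, he, hf2, hdk]
            · have he : e ≠ d := by intro h; apply h2; rw [h]; exact Nat.lt_succ_self k
              simp [h1, h2, hf2, he, hf1, below]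
        obtain ⟨W3, hW3⟩ := ih p f2
        refine ⟨W1.append ((SimpleGraph.Walk.cons hadj W3).copy rfl heq.symm), ?_⟩
        simp only [SimpleGraph.Walk.length_append, SimpleGraph.Walk.length_copy,
          SimpleGraph.Walk.length_cons]
        omega
    · have heq : below (k + 1) p f = below k p f := by
        funext e; simp only [below]
        have h1 : (e : ℕ) < k := lt_of_lt_of_le e.2 (by omega)
        simp [h1, Nat.lt_succ_of_lt h1]
      obtain ⟨W, hW⟩ := ih p f
      exact ⟨W.copy rfl heq.symm, by simpa using hW.trans (by omega)⟩

lemma upper (k : ℕ) (f g : Fin n → Fin 3) (hfg : ∀ e : Fin n, k ≤ (e : ℕ) → f e = g e) :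
    ∃ W : (hanoiGraph n).Walk f g, W.length + 1 ≤ 2 ^ k := by
  induction k generalizing f g with
  | zero =>
    have h : f = g := funext fun e => hfg e (Nat.zero_le _)
    subst h
    exact ⟨SimpleGraph.Walk.nil, by simp⟩
  | succ k ih =>
    have hpow : 2 ^ (k + 1) = 2 ^ k + 2 ^ k := by ring
    by_cases hk : k < n
    · set d : Fin n := ⟨k, hk⟩ with hdk
      by_cases hfd : f d = g d
      · obtain ⟨W, hW⟩ := ih f g (fun e he => by
          rcases Nat.eq_or_lt_of_le he with h | h
          · have he2 : e = d := Fin.ext h.symm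
            rw [he2]; exact hfd
          · exact hfg e h)
        exact ⟨W, hW.trans (by omega)⟩
      · set s : Fin 3 := -(f d + g d) with hs
        have hsne : s ≠ f d ∧ s ≠ g d := other_ne (f d) (g d) hfd
        set f1 : Fin n → Fin 3 := below k s f with hf1
        set f2 : Fin n → Fin 3 := fun e => if e = d then g d else f1 e with hf2
        obtain ⟨W1, hW1⟩ := toPerfect k s f
        have f1d : f1 d = f d := by simp [hf1, below, hdk]
        have f2d : f2 d = g d := by simp [hf2]
        have hadj : (hanoiGraph n).Adj f1 f2 := by
          apply adj_of_move d
          · rw [f1d, f2d]; exact hfd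
          · intro e he; simp [hf2, he]
          · intro e he
            have hek : (e : ℕ) < k := he
            have h1e : f1 e = s := by simp [hf1, below, hek]
            rw [h1e, f1d, f2d]
            exact hsne
        obtain ⟨W2, hW2⟩ := ih f2 g (fun e he => by
          rcases Nat.eq_or_lt_of_le he with h | h
          · have he2 : e = d := Fin.ext h.symm
            rw [he2, f2d]
          · have hne : e ≠ d := by
              intro h'; rw [h'] at h; exact absurd h (by simp [hdk])
            have h1 : ¬ (e : ℕ) < k := by omega
            have : f2 e = f e := by simp [hf2, hne, hf1, below, h1]
            rw [this]
            exact hfg e (by omega))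
        refine ⟨W1.append (SimpleGraph.Walk.cons hadj W2), ?_⟩
        simp only [SimpleGraph.Walk.length_append, SimpleGraph.Walk.length_cons]
        omega
    · obtain ⟨W, hW⟩ := ih f g (fun e he =>
        absurd he (by have := e.2; omega))
      exact ⟨W, hW.trans (by omega)⟩

lemma first_move {a b : Fin n → Fin 3} (d : Fin n) (W : (hanoiGraph n).Walk a b) :
    a d ≠ b d →
    ∃ (c c' : Fin n → Fin 3) (W1 : (hanoiGraph n).Walk a c)
      (_ : (hanoiGraph n).Adj c c') (W2 : (hanoiGraph n).Walk c' b),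
      W.length = W1.length + 1 + W2.length ∧ c d = a d ∧ c d ≠ c' d := by
  induction W with
  | nil => intro hd; exact absurd rfl hd
  | @cons u v w h p ih =>
    intro hd
    by_cases hm : u d = v d
    · obtain ⟨c, c', W1, h', W2, hlen, hc, hcc⟩ := ih (fun h' => hd (hm.trans h'))
      refine ⟨c, c', SimpleGraph.Walk.cons h W1, h', W2, ?_, hc.trans hm.symm, hcc⟩
      simp only [SimpleGraph.Walk.length_cons, hlen]; omega
    · refine ⟨u, v, SimpleGraph.Walk.nil, h, p, ?_, rfl, hm⟩
      simp only [SimpleGraph.Walk.length_cons, SimpleGraph.Walk.length_nil]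
      omega

section Lower

lemma lowerD (k : ℕ) (hk : k < n)
    (hC : ∀ (p q : Fin 3), p ≠ q → ∀ (a b : Fin n → Fin 3) (W : (hanoiGraph n).Walk a b),
      (∀ e : Fin n, (e : ℕ) < k → a e = p) → (∀ e : Fin n, (e : ℕ) < k → b e = q) →
      2 ^ k ≤ W.length + 1) :
    ∀ (L : ℕ) (q : Fin 3) (a b : Fin n → Fin 3) (W : (hanoiGraph n).Walk a b),
      W.length ≤ L → a ⟨k, hk⟩ ≠ q → (∀ e : Fin n, (e : ℕ) ≤ k → b e = q) →
      2 ^ k ≤ W.length := by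
  intro L
  induction L with
  | zero =>
    intro q a b W hL ha hb
    have hab : a = b := SimpleGraph.Walk.eq_of_length_eq_zero (Nat.le_zero.mp hL)
    exact absurd (hab ▸ hb ⟨k, hk⟩ (le_refl k)) ha
  | succ L ih =>
    intro q a b W hL ha hb
    set d : Fin n := ⟨k, hk⟩ with hdk
    have hab : a d ≠ b d := by rw [hb d (le_refl k)]; exact ha
    obtain ⟨c, c', W1, h, W2, hlen, hcd, hmv⟩ := first_move d W hab
    obtain ⟨heq, hsm⟩ := adj_move_of_ne h hmv
    by_cases hr : c' d = q
    · set s : Fin 3 := -(c d + c' d) with hs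
      have hother := other_ne (c d) (c' d) hmv
      have hsq : s ≠ q := hr ▸ hother.2
      have hc's : ∀ e : Fin n, (e : ℕ) < k → c' e = s := by
        intro e he
        have hed : e < d := by simpa [Fin.lt_def, hdk] using he
        have := fin3_eq_other hmv (hsm e hed).1 (hsm e hed).2
        rw [← heq e (ne_of_lt hed)]
        exact this
      have h2 := hC s q hsq c' b W2 hc's (fun e he => hb e (le_of_lt he))
      omega
    · have h2 := ih q c' b W2 (by omega) hr hb
      omega

lemma lowerC : ∀ (k : ℕ), k ≤ n → ∀ (p q : Fin 3), p ≠ q →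
    ∀ (a b : Fin n → Fin 3) (W : (hanoiGraph n).Walk a b),
    (∀ e : Fin n, (e : ℕ) < k → a e = p) → (∀ e : Fin n, (e : ℕ) < k → b e = q) →
    2 ^ k ≤ W.length + 1 := by
  intro k
  induction k with
  | zero => intro _ p q _ a b W _ _; simp
  | succ k ih =>
    intro hk p q hpq a b W ha hb
    have hkn : k < n := by omega
    have hpow : 2 ^ (k + 1) = 2 ^ k + 2 ^ k := by ring
    set d : Fin n := ⟨k, hkn⟩ with hdk
    have hak : a d = p := ha d (Nat.lt_succ_self k)
    have hbk : b d = q := hb d (Nat.lt_succ_self k)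
    have hab : a d ≠ b d := by rw [hak, hbk]; exact hpq
    obtain ⟨c, c', W1, h, W2, hlen, hcd, hmv⟩ := first_move d W hab
    obtain ⟨heq, hsm⟩ := adj_move_of_ne h hmv
    set s : Fin 3 := -(c d + c' d) with hs
    have hother := other_ne (c d) (c' d) hmv
    have hcdp : c d = p := hcd.trans hak
    have hcs : ∀ e : Fin n, (e : ℕ) < k → c e = s := by
      intro e he
      have hed : e < d := by simpa [Fin.lt_def, hdk] using he
      exact fin3_eq_other hmv (hsm e hed).1 (hsm e hed).2
    have hc's : ∀ e : Fin n, (e : ℕ) < k → c' e = s := by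
      intro e he
      have hed : e < d := by simpa [Fin.lt_def, hdk] using he
      rw [← heq e (ne_of_lt hed)]
      exact hcs e he
    have hps : p ≠ s := by
      rw [← hcdp]
      exact fun h' => hother.1 h'.symm
    have h1 : 2 ^ k ≤ W1.length + 1 :=
      ih (le_of_lt hkn) p s hps a c W1 (fun e he => ha e (Nat.lt_succ_of_lt he)) hcs
    by_cases hr : c' d = q
    · have hsq : s ≠ q := hr ▸ hother.2
      have h2 : 2 ^ k ≤ W2.length + 1 :=
        ih (le_of_lt hkn) s q hsq c' b W2 hc's (fun e he => hb e (Nat.lt_succ_of_lt he))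
      omega
    · have h2 : 2 ^ k ≤ W2.length :=
        lowerD k hkn (ih (le_of_lt hkn)) W2.length q c' b W2 (le_refl _) hr
          (fun e he => hb e (by omega))
      omega

end Lower

end HanoiAux

/-- The diameter of the Hanoi graph `H_3^n` is `2^n - 1`: any configuration can be
transformed into any other in at most `2^n - 1` moves, with equality attained by
pairs of perfect states. -/
theorem hanoi_graph_diameter (n : ℕ) :
    (∀ f g : Fin n → Fin 3, (hanoiGraph n).dist f g ≤ 2 ^ n - 1) ∧
    (hanoiGraph n).dist (fun _ => (0 : Fin 3)) (fun _ => (2 : Fin 3)) = 2 ^ n - 1 := by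
  have hupper : ∀ f g : Fin n → Fin 3, (hanoiGraph n).dist f g ≤ 2 ^ n - 1 := by
    intro f g
    obtain ⟨W, hW⟩ := HanoiAux.upper n f g (fun e he => absurd he (by have := e.2; omega))
    have h1 := SimpleGraph.dist_le W
    omega
  refine ⟨hupper, le_antisymm (hupper _ _) ?_⟩
  obtain ⟨W, hW⟩ := HanoiAux.upper (n := n) n (fun _ => (0 : Fin 3)) (fun _ => (2 : Fin 3))
    (fun e he => absurd he (by have := e.2; omega))
  have hreach : (hanoiGraph n).Reachable (fun _ => (0 : Fin 3)) (fun _ => (2 : Fin 3)) := ⟨W⟩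
  obtain ⟨P, hP⟩ := hreach.exists_walk_length_eq_dist
  have hlow := HanoiAux.lowerC n (le_refl n) (0 : Fin 3) (2 : Fin 3) (by decide)
    (fun _ => (0 : Fin 3)) (fun _ => (2 : Fin 3)) P (fun e _ => rfl) (fun e _ => rfl)
  omega
end

section
/- In the three-player 'truel' game on the 3-partite digraph with V₀={v,t₂}, V₁={p₁,p₂}, V₂={q,t₁} and edges v→p₁, v→p₂, p₁→t₁, p₂→q, q→t₂, no single player has a winning strategy, but each of the three two-player coalitions {V₀,V₁}, {V₀,V₂}, {V₁,V₂} has a winning strategy. -/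
/-- The six positions of the truel game. -/
inductive Truel : Type
  | v | p1 | p2 | q | t1 | t2
  deriving DecidableEq

open Truel

/-- Which of the three players owns each position: `V₀ = {v, t₂}`,
`V₁ = {p₁, p₂}`, `V₂ = {q, t₁}`. -/
def truelPlayer : Truel → Fin 3
  | v => 0 | t2 => 0
  | p1 => 1 | p2 => 1
  | q => 2 | t1 => 2

/-- The edges of the truel game graph. -/
def truelEdge (a b : Truel) : Prop :=
  (a, b) ∈ [(v, p1), (v, p2), (p1, t1), (p2, q), (q, t2)]

/-- The win set `A = S = {t₁, t₂}`. -/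
def truelWinSet : Set Truel := {t1, t2}

/-- A game event in subgraph `H`: a maximal simple path starting at `v`. -/
def TruelEvent (H : Truel → Truel → Prop) (p : List Truel) : Prop :=
  (p ≠ [] ∧ p.head? = some v ∧ p.Chain' H ∧ p.Nodup) ∧
    ∀ x y, p.getLast? = some x → H x y → y ∈ p

/-- Coalition `I` has a winning strategy: a subgraph `H` of the game graph,
removing only edges emanating from positions of players in `I`, such that every
game event in `H` ends with a last move made by a member of `I` into the win set. -/
def TruelCoalitionWins (I : Set (Fin 3)) : Prop :=
  ∃ H : Truel → Truel → Prop,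
    (∀ a b, H a b → truelEdge a b) ∧
    (∀ a b, truelPlayer a ∉ I → truelEdge a b → H a b) ∧
    ∀ p, TruelEvent H p →
      ∃ r x y, p = r ++ [x, y] ∧ y ∈ truelWinSet ∧ truelPlayer x ∈ I

instance : ∀ a b, Decidable (truelEdge a b) := fun a b => by
  unfold truelEdge; infer_instance

lemma truel_events_classify (H : Truel → Truel → Prop)
    (hsub : ∀ a b, H a b → truelEdge a b) :
    ∀ p, TruelEvent H p →
      p = [v] ∨ p = [v, p1] ∨ p = [v, p1, t1] ∨ p = [v, p2] ∨
        p = [v, p2, q] ∨ p = [v, p2, q, t2] := by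
  rintro p ⟨⟨hne, hhd, hch, -⟩, -⟩
  match p, hne with
  | a :: l, _ =>
  simp only [List.head?_cons, Option.some.injEq] at hhd
  subst hhd
  match l with
  | [] => exact Or.inl rfl
  | b :: l =>
    simp only [List.Chain', List.isChain_cons_cons] at hch
    obtain ⟨h1, hch⟩ := hch
    have e1 := hsub _ _ h1
    cases b <;> simp [truelEdge] at e1
    · match l with
      | [] => exact Or.inr (Or.inl rfl)
      | c :: l =>
        rw [List.isChain_cons_cons] at hch
        obtain ⟨h2, hch⟩ := hch
        have e2 := hsub _ _ h2
        cases c <;> simp [truelEdge] at e2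
        match l with
        | [] => exact Or.inr (Or.inr (Or.inl rfl))
        | d :: l =>
          rw [List.isChain_cons_cons] at hch
          have e3 := hsub _ _ hch.1
          cases d <;> simp [truelEdge] at e3
    · match l with
      | [] => exact Or.inr (Or.inr (Or.inr (Or.inl rfl)))
      | c :: l =>
        rw [List.isChain_cons_cons] at hch
        obtain ⟨h2, hch⟩ := hch
        have e2 := hsub _ _ h2
        cases c <;> simp [truelEdge] at e2
        match l with
        | [] => exact Or.inr (Or.inr (Or.inr (Or.inr (Or.inl rfl))))
        | d :: l =>
          rw [List.isChain_cons_cons] at hch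
          obtain ⟨h3, hch⟩ := hch
          have e3 := hsub _ _ h3
          cases d <;> simp [truelEdge] at e3
          match l with
          | [] => exact Or.inr (Or.inr (Or.inr (Or.inr (Or.inr rfl))))
          | e :: l =>
            rw [List.isChain_cons_cons] at hch
            have e4 := hsub _ _ hch.1
            cases e <;> simp [truelEdge] at e4

lemma no_append1 {α : Type*} {a x y : α} {r : List α} (h : [a] = r ++ [x, y]) : False := by
  rcases r with _ | ⟨b, r⟩ <;> simp_all

lemma last_of_append2 {α : Type*} {a b x y : α} {r : List α}
    (h : [a, b] = r ++ [x, y]) : x = a ∧ y = b := by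
  rcases r with _ | ⟨c, _ | ⟨d, r⟩⟩ <;> simp_all

lemma last_of_append3 {α : Type*} {a b c x y : α} {r : List α}
    (h : [a, b, c] = r ++ [x, y]) : x = b ∧ y = c := by
  rcases r with _ | ⟨e, _ | ⟨f, _ | ⟨g, r⟩⟩⟩ <;> simp_all

lemma last_of_append4 {α : Type*} {a b c d x y : α} {r : List α}
    (h : [a, b, c, d] = r ++ [x, y]) : x = c ∧ y = d := by
  rcases r with _ | ⟨e, _ | ⟨f, _ | ⟨g, _ | ⟨i, r⟩⟩⟩⟩ <;> simp_all

lemma ev_vp1t1 (H : Truel → Truel → Prop) (hsub : ∀ a b, H a b → truelEdge a b)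
    (h1 : H v p1) (h2 : H p1 t1) : TruelEvent H [v, p1, t1] := by
  refine ⟨⟨by simp, rfl, by simp [List.Chain', List.isChain_cons_cons, h1, h2], by decide⟩, ?_⟩
  intro x y hx hy
  have hx' : t1 = x := by simpa [List.getLast?] using hx
  subst hx'
  have := hsub _ _ hy
  cases y <;> simp [truelEdge] at this

lemma ev_vp2qt2 (H : Truel → Truel → Prop) (hsub : ∀ a b, H a b → truelEdge a b)
    (h1 : H v p2) (h2 : H p2 q) (h3 : H q t2) : TruelEvent H [v, p2, q, t2] := by
  refine ⟨⟨by simp, rfl, by simp [List.Chain', List.isChain_cons_cons, h1, h2, h3], by decide⟩, ?_⟩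
  intro x y hx hy
  have hx' : t2 = x := by simpa [List.getLast?] using hx
  subst hx'
  have := hsub _ _ hy
  cases y <;> simp [truelEdge] at this

lemma ev_v (H : Truel → Truel → Prop) (h1 : ¬ H v p1) (h2 : ¬ H v p2)
    (hsub : ∀ a b, H a b → truelEdge a b) : TruelEvent H [v] := by
  refine ⟨⟨by simp, rfl, by simp [List.Chain'], by decide⟩, ?_⟩
  intro x y hx hy
  have hx' : v = x := by simpa [List.getLast?] using hx
  subst hx'
  have := hsub _ _ hy
  cases y <;> simp [truelEdge] at this <;> simp_all

lemma ev_vp2 (H : Truel → Truel → Prop) (h1 : H v p2) (h2 : ¬ H p2 q)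
    (hsub : ∀ a b, H a b → truelEdge a b) : TruelEvent H [v, p2] := by
  refine ⟨⟨by simp, rfl, by simp [List.Chain', List.isChain_cons_cons, h1], by decide⟩, ?_⟩
  intro x y hx hy
  have hx' : p2 = x := by simpa [List.getLast?] using hx
  subst hx'
  have := hsub _ _ hy
  cases y <;> simp [truelEdge] at this <;> simp_all

/-- In the truel game, no single player has a winning strategy, but each of the
three two-player coalitions has one. -/
theorem truel_coalitions :
    (∀ i : Fin 3, ¬ TruelCoalitionWins {i}) ∧
    TruelCoalitionWins {0, 1} ∧ TruelCoalitionWins {0, 2} ∧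
    TruelCoalitionWins {1, 2} := by
  refine ⟨?_, ?_, ?_, ?_⟩
  · intro i
    fin_cases i
    · rintro ⟨H, hsub, hkeep, hwin⟩
      have hp1t1 : H p1 t1 := hkeep _ _ (by simp [truelPlayer]) (by decide)
      have hp2q : H p2 q := hkeep _ _ (by simp [truelPlayer]) (by decide)
      have hqt2 : H q t2 := hkeep _ _ (by simp [truelPlayer]) (by decide)
      by_cases h1 : H v p1
      · obtain ⟨r, x, y, heq, -, hx⟩ := hwin _ (ev_vp1t1 H hsub h1 hp1t1)
        obtain ⟨rfl, rfl⟩ := last_of_append3 heq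
        simp [truelPlayer] at hx
      · by_cases h2 : H v p2
        · obtain ⟨r, x, y, heq, -, hx⟩ := hwin _ (ev_vp2qt2 H hsub h2 hp2q hqt2)
          obtain ⟨rfl, rfl⟩ := last_of_append4 heq
          simp [truelPlayer] at hx
        · obtain ⟨r, x, y, heq, -, -⟩ := hwin _ (ev_v H h1 h2 hsub)
          exact no_append1 heq
    · rintro ⟨H, hsub, hkeep, hwin⟩
      have hv2 : H v p2 := hkeep _ _ (by simp [truelPlayer]) (by decide)
      have hqt2 : H q t2 := hkeep _ _ (by simp [truelPlayer]) (by decide)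
      by_cases h2 : H p2 q
      · obtain ⟨r, x, y, heq, -, hx⟩ := hwin _ (ev_vp2qt2 H hsub hv2 h2 hqt2)
        obtain ⟨rfl, rfl⟩ := last_of_append4 heq
        simp [truelPlayer] at hx
      · obtain ⟨r, x, y, heq, hw, -⟩ := hwin _ (ev_vp2 H hv2 h2 hsub)
        obtain ⟨rfl, rfl⟩ := last_of_append2 heq
        simp [truelWinSet] at hw
    · rintro ⟨H, hsub, hkeep, hwin⟩
      have hv1 : H v p1 := hkeep _ _ (by simp [truelPlayer]) (by decide)
      have hp1t1 : H p1 t1 := hkeep _ _ (by simp [truelPlayer]) (by decide)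
      obtain ⟨r, x, y, heq, -, hx⟩ := hwin _ (ev_vp1t1 H hsub hv1 hp1t1)
      obtain ⟨rfl, rfl⟩ := last_of_append3 heq
      simp [truelPlayer] at hx
  · refine ⟨fun a b => (a, b) ∈ [(v, p1), (p1, t1), (q, t2)],
      by intro a b h; fin_cases h <;> decide, ?_, ?_⟩
    · intro a b ha hb
      cases a <;> simp [truelPlayer] at ha <;> cases b <;> revert hb <;> decide
    · intro p hp
      have hc := truel_events_classify _ (by intro a b h; fin_cases h <;> decide) p hp
      obtain ⟨⟨-, -, hch, -⟩, hmax⟩ := hp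
      rcases hc with rfl | rfl | rfl | rfl | rfl | rfl
      · have := hmax v p1 rfl (by simp); simp at this
      · have := hmax p1 t1 rfl (by simp); simp at this
      · exact ⟨[v], p1, t1, rfl, by simp [truelWinSet], by simp [truelPlayer]⟩
      · simp [List.Chain', List.isChain_cons_cons] at hch
      · simp [List.Chain', List.isChain_cons_cons] at hch
      · simp [List.Chain', List.isChain_cons_cons] at hch
  · refine ⟨fun a b => (a, b) ∈ [(v, p2), (p1, t1), (p2, q), (q, t2)],
      by intro a b h; fin_cases h <;> decide, ?_, ?_⟩
    · intro a b ha hb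
      cases a <;> simp [truelPlayer] at ha <;> cases b <;> revert hb <;> decide
    · intro p hp
      have hc := truel_events_classify _ (by intro a b h; fin_cases h <;> decide) p hp
      obtain ⟨⟨-, -, hch, -⟩, hmax⟩ := hp
      rcases hc with rfl | rfl | rfl | rfl | rfl | rfl
      · have := hmax v p2 rfl (by simp); simp at this
      · simp [List.Chain', List.isChain_cons_cons] at hch
      · simp [List.Chain', List.isChain_cons_cons] at hch
      · have := hmax p2 q rfl (by simp); simp at this
      · have := hmax q t2 rfl (by simp); simp at this
      · exact ⟨[v, p2], q, t2, rfl, by simp [truelWinSet], by simp [truelPlayer]⟩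
  · refine ⟨truelEdge, fun _ _ h => h, fun _ _ _ h => h, ?_⟩
    intro p hp
    have hc := truel_events_classify _ (fun _ _ h => h) p hp
    obtain ⟨⟨-, -, hch, -⟩, hmax⟩ := hp
    rcases hc with rfl | rfl | rfl | rfl | rfl | rfl
    · have := hmax v p1 rfl (by decide); simp at this
    · have := hmax p1 t1 rfl (by decide); simp at this
    · exact ⟨[v], p1, t1, rfl, by simp [truelWinSet], by simp [truelPlayer]⟩
    · have := hmax p2 q rfl (by decide); simp at this
    · have := hmax q t2 rfl (by decide); simp at this
    · exact ⟨[v, p2], q, t2, rfl, by simp [truelWinSet], by simp [truelPlayer]⟩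
end
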